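/- (Sub-exponential decay in the obstacle, L∞-in-time form.) Let u be a classical solution of ∂ₜu = Δu − λu on (0,∞) × Ω₀ with λ > 0, extended continuously to t = 0, with u(0,x) = 0 for every x ∈ Ω₀, and set M := sup_{t ≥ 0} ∫_{Ω₀} u(t,x)² dx < ∞. Let K ⊆ Ω₀ be compact, a > 0 with the closed a-neighbourhood K_a contained in Ω₀, and let 0 < γ < 1 and 0 < ν < 1/2. Then for every λ ≥ max(1, (16e/(γ²a²))^{1/(1−2ν)}) one has sup_{t ≥ 0} ∫_K u(t,x)² dx ≤ e^{−λ^ν} · M. -/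

import Mathlib

open MeasureTheory Metric Set Function Filter Topology

/-- The Laplacian of `f : ℝ^m → ℝ`, as the sum of the second partial derivatives
in the coordinate directions. -/
noncomputable def laplacian {m : ℕ} (f : EuclideanSpace ℝ (Fin m) → ℝ)
    (x : EuclideanSpace ℝ (Fin m)) : ℝ :=
  ∑ i : Fin m,
    fderiv ℝ (fun y => fderiv ℝ f y (EuclideanSpace.single i 1)) x (EuclideanSpace.single i 1)

/-- `u : ℝ × ℝ^m → ℝ` is a classical solution of `∂ₜ u = Δu − λ u` on `(0,∞) × Ω₀`:
it is continuous on `[0,∞) × Ω₀` (i.e. extends continuously to `t = 0`), has continuous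
derivatives `∂ₜu`, `∇ₓu`, `∇ₓ²u` on `(0,∞) × Ω₀`, satisfies the equation pointwise there,
`u(t,·)`, `∇ₓu(t,·)` are square-integrable on `Ω₀` for each `t`, and
`t ↦ ‖u(t)‖_{L²(Ω₀)}` is bounded. -/
structure IsClassicalSolution {m : ℕ} (Ω₀ : Set (EuclideanSpace ℝ (Fin m)))
    (lam : ℝ) (u : ℝ → EuclideanSpace ℝ (Fin m) → ℝ) : Prop where
  cont : ContinuousOn (fun p : ℝ × EuclideanSpace ℝ (Fin m) => u p.1 p.2)
      (Set.Ici 0 ×ˢ Ω₀)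
  diff_t : ∀ t ∈ Set.Ioi (0:ℝ), ∀ x ∈ Ω₀, DifferentiableAt ℝ (fun s => u s x) t
  diff_x : ∀ t ∈ Set.Ioi (0:ℝ), ∀ x ∈ Ω₀, DifferentiableAt ℝ (u t) x
  diff_xx : ∀ t ∈ Set.Ioi (0:ℝ), ∀ x ∈ Ω₀,
      DifferentiableAt ℝ (fun y => fderiv ℝ (u t) y) x
  cont_dt : ContinuousOn (fun p : ℝ × EuclideanSpace ℝ (Fin m) =>
      deriv (fun s => u s p.2) p.1) (Set.Ioi 0 ×ˢ Ω₀)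
  cont_grad : ContinuousOn (fun p : ℝ × EuclideanSpace ℝ (Fin m) =>
      fderiv ℝ (u p.1) p.2) (Set.Ioi 0 ×ˢ Ω₀)
  cont_hess : ContinuousOn (fun p : ℝ × EuclideanSpace ℝ (Fin m) =>
      fderiv ℝ (fun y => fderiv ℝ (u p.1) y) p.2) (Set.Ioi 0 ×ˢ Ω₀)
  eqn : ∀ t ∈ Set.Ioi (0:ℝ), ∀ x ∈ Ω₀,
      deriv (fun s => u s x) t = laplacian (u t) x - lam * u t x
  sq_integrable : ∀ t : ℝ, IntegrableOn (fun x => (u t x) ^ 2) Ω₀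
  grad_sq_integrable : ∀ t : ℝ, IntegrableOn (fun x => ‖gradient (u t) x‖ ^ 2) Ω₀
  l2_bounded : ∃ C : ℝ, ∀ t : ℝ, ∫ x in Ω₀, (u t x) ^ 2 ≤ C


variable {m : ℕ}

set_option maxHeartbeats 2000000 in
lemma energy_step
    (Ω₀ : Set (EuclideanSpace ℝ (Fin m))) (hΩ₀ : IsOpen Ω₀) (lam : ℝ) (hlam : 0 < lam)
    (u : ℝ → EuclideanSpace ℝ (Fin m) → ℝ)
    (hu : IsClassicalSolution Ω₀ lam u) (h0 : ∀ x ∈ Ω₀, u 0 x = 0)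
    (η η₂ : EuclideanSpace ℝ (Fin m) → ℝ) (V : Set (EuclideanSpace ℝ (Fin m))) (hV : IsOpen V)
    (hη : ContDiff ℝ (⊤:ℕ∞) η) (hηc : HasCompactSupport η)
    (hη0 : ∀ x, 0 ≤ η x) (hη1 : ∀ x, η x ≤ 1)
    (hη₂ : ContDiff ℝ (⊤:ℕ∞) η₂)
    (hη₂Ω : tsupport η₂ ⊆ Ω₀)
    (hSV : tsupport η ⊆ V) (hV1 : ∀ x ∈ V, η₂ x = 1)
    (D : Set (EuclideanSpace ℝ (Fin m))) (hD : MeasurableSet D) (hDΩ : D ⊆ Ω₀)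
    (hsupp : tsupport η ⊆ D)
    (B Q : ℝ)
    (hB : ∀ x, ∑ i : Fin m, (fderiv ℝ η x (EuclideanSpace.single i 1))^2 ≤ B)
    (hQ : ∀ t, 0 ≤ t → ∫ x in D, (u t x)^2 ≤ Q) :
    ∀ t, 0 ≤ t → ∫ x in tsupport η, (η x)^2 * (u t x)^2 ≤ B * Q / lam := by
  classical
  set S : Set (EuclideanSpace ℝ (Fin m)) := tsupport η with hSdef
  have hScomp : IsCompact S := hηc
  have hSclosed : IsClosed S := isClosed_closure
  have hSmeas : MeasurableSet S := hSclosed.measurableSet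
  have hSΩ : S ⊆ Ω₀ := hsupp.trans hDΩ
  have hη0S : ∀ x ∉ S, η x = 0 := fun x hx => image_eq_zero_of_notMem_tsupport hx
  have hB0 : 0 ≤ B := le_trans (Finset.sum_nonneg fun i _ => sq_nonneg _) (hB 0)
  have hQ0 : 0 ≤ Q := le_trans (setIntegral_nonneg hD fun x _ => sq_nonneg _) (hQ 0 le_rfl)
  have hucont : ∀ t : ℝ, 0 ≤ t → ContinuousOn (u t) Ω₀ := by
    intro t ht
    have : ContinuousOn (fun x => (fun p : ℝ × EuclideanSpace ℝ (Fin m) => u p.1 p.2) (t, x)) Ω₀ :=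
      hu.cont.comp (Continuous.continuousOn (by fun_prop)) (fun x hx => ⟨ht, hx⟩)
    exact this
  have hu2int : ∀ t : ℝ, IntegrableOn (fun x => (u t x)^2) S := fun t =>
    (hu.sq_integrable t).mono_set hSΩ
  set F : ℝ → ℝ := fun t => ∫ x in S, η x ^ 2 * u t x ^ 2 with hF
  -- integrability of the weighted square
  have hFint : ∀ t : ℝ, IntegrableOn (fun x => η x ^ 2 * u t x ^ 2) S := by
    intro t
    apply Integrable.bdd_mul (hu2int t)
    · exact ((hη.continuous.aestronglyMeasurable).pow 2).restrict
    · exact ae_of_all _ fun x => show ‖η x ^ 2‖ ≤ 1 by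
        rw [Real.norm_eq_abs, abs_of_nonneg (sq_nonneg _)]
        nlinarith [hη0 x, hη1 x]
  -- notation for coordinate directions
  have hVΩ : IsOpen (V ∩ Ω₀) := hV.inter hΩ₀
  have hSVΩ : S ⊆ V ∩ Ω₀ := fun x hx => ⟨hSV hx, hSΩ hx⟩
  -- continuity of spatial data at fixed positive time
  have hgradcont : ∀ t : ℝ, 0 < t → ContinuousOn (fun x => fderiv ℝ (u t) x) Ω₀ := by
    intro t ht
    have : ContinuousOn (fun x => (fun p : ℝ × EuclideanSpace ℝ (Fin m) =>
        fderiv ℝ (u p.1) p.2) (t, x)) Ω₀ :=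
      hu.cont_grad.comp (Continuous.continuousOn (by fun_prop)) (fun x hx => ⟨ht, hx⟩)
    exact this
  have hhesscont : ∀ t : ℝ, 0 < t →
      ContinuousOn (fun x => fderiv ℝ (fun y => fderiv ℝ (u t) y) x) Ω₀ := by
    intro t ht
    have : ContinuousOn (fun x => (fun p : ℝ × EuclideanSpace ℝ (Fin m) =>
        fderiv ℝ (fun y => fderiv ℝ (u p.1) y) p.2) (t, x)) Ω₀ :=
      hu.cont_hess.comp (Continuous.continuousOn (by fun_prop)) (fun x hx => ⟨ht, hx⟩)
    exact this
  have hdtcont : ∀ t : ℝ, 0 < t →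
      ContinuousOn (fun x => deriv (fun s => u s x) t) Ω₀ := by
    intro t ht
    have : ContinuousOn (fun x => (fun p : ℝ × EuclideanSpace ℝ (Fin m) =>
        deriv (fun s => u s p.2) p.1) (t, x)) Ω₀ :=
      hu.cont_dt.comp (Continuous.continuousOn (by fun_prop)) (fun x hx => ⟨ht, hx⟩)
    exact this
  -- second-derivative: identification of the Laplacian summands
  have hD2 : ∀ t : ℝ, 0 < t → ∀ x ∈ Ω₀, ∀ i : Fin m,
      HasFDerivAt (fun y => fderiv ℝ (u t) y (EuclideanSpace.single i 1))
        ((ContinuousLinearMap.apply ℝ ℝ (EuclideanSpace.single i 1)).comp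
          (fderiv ℝ (fun y => fderiv ℝ (u t) y) x)) x := by
    intro t ht x hx i
    exact ((ContinuousLinearMap.apply ℝ ℝ (EuclideanSpace.single i 1)).hasFDerivAt).comp x
      (hu.diff_xx t ht x hx).hasFDerivAt
  have hlap : ∀ t : ℝ, 0 < t → ∀ x ∈ Ω₀,
      laplacian (u t) x = ∑ i : Fin m,
        (fderiv ℝ (fun y => fderiv ℝ (u t) y) x (EuclideanSpace.single i 1))
          (EuclideanSpace.single i 1) := by
    intro t ht x hx
    unfold laplacian
    apply Finset.sum_congr rfl
    intro i _
    rw [(hD2 t ht x hx i).fderiv]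
    rfl
  have hlapcont : ∀ t : ℝ, 0 < t → ContinuousOn (laplacian (u t)) Ω₀ := by
    intro t ht
    refine ContinuousOn.congr (continuousOn_finset_sum Finset.univ fun i _ => ?_)
      (fun x hx => hlap t ht x hx)
    exact (ContinuousLinearMap.apply ℝ ℝ (EuclideanSpace.single i 1)).continuous.comp_continuousOn
      ((ContinuousLinearMap.apply ℝ (EuclideanSpace ℝ (Fin m) →L[ℝ] ℝ)
        (EuclideanSpace.single i 1)).continuous.comp_continuousOn (hhesscont t ht))
  -- the integration by parts estimate
  have hηd : Differentiable ℝ η := hη.differentiable (by simp)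
  have hη₂d : Differentiable ℝ η₂ := hη₂.differentiable (by simp)
  have key : ∀ t : ℝ, 0 < t →
      ∫ x in S, (η x ^ 2 * u t x) * laplacian (u t) x ≤ B * ∫ x in S, u t x ^ 2 := by
    intro t ht
    set v : Fin m → EuclideanSpace ℝ (Fin m) := fun i => EuclideanSpace.single i 1 with hv
    set w : EuclideanSpace ℝ (Fin m) → ℝ := u t with hw
    set f : EuclideanSpace ℝ (Fin m) → ℝ := fun x => (η x * η x) * w x with hfdef
    set g : Fin m → EuclideanSpace ℝ (Fin m) → ℝ :=
      fun i x => η₂ x * fderiv ℝ w x (v i) with hgdef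
    have hwcont : ContinuousOn w Ω₀ := hucont t ht.le
    have hwd : ∀ x ∈ Ω₀, DifferentiableAt ℝ w x := fun x hx => hu.diff_x t ht x hx
    have hf0 : ∀ x ∉ S, f x = 0 := by
      intro x hx; simp [hfdef, hη0S x hx]
    have hfzero_nhds : ∀ x ∉ S, f =ᶠ[𝓝 x] 0 := by
      intro x hx
      filter_upwards [hSclosed.isOpen_compl.mem_nhds hx] with y hy
      exact hf0 y hy
    have hfdiff : Differentiable ℝ f := by
      intro x
      by_cases hx : x ∈ Ω₀
      · exact ((hηd x).mul (hηd x)).mul (hwd x hx)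
      · exact (differentiableAt_const (0:ℝ)).congr_of_eventuallyEq
          (hfzero_nhds x (fun hmem => hx (hSΩ hmem)))
    have hfder0 : ∀ x ∉ S, fderiv ℝ f x = 0 := by
      intro x hx
      rw [(hfzero_nhds x hx).fderiv_eq]
      exact fderiv_const_apply 0
    have hfD : ∀ x ∈ Ω₀, fderiv ℝ f x
        = (η x * η x) • fderiv ℝ w x + w x • (η x • fderiv ℝ η x + η x • fderiv ℝ η x) := by
      intro x hx
      rw [hfdef]
      rw [fderiv_fun_mul (c := fun y => η y * η y) ((hηd x).mul (hηd x)) (hwd x hx), fderiv_fun_mul (hηd x) (hηd x)]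
    have hg0 : ∀ i, ∀ x ∉ tsupport η₂, g i x = 0 := by
      intro i x hx; simp [hgdef, image_eq_zero_of_notMem_tsupport hx]
    have hgdiff : ∀ i, Differentiable ℝ (g i) := by
      intro i x
      by_cases hx : x ∈ Ω₀
      · exact (hη₂d x).mul (hD2 t ht x hx i).differentiableAt
      · refine (differentiableAt_const (0:ℝ)).congr_of_eventuallyEq ?_
        have hx2 : x ∉ tsupport η₂ := fun hmem => hx (hη₂Ω hmem)
        filter_upwards [(isClosed_tsupport η₂).isOpen_compl.mem_nhds hx2] with y hy
        exact hg0 i y hy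
    have hgS : ∀ i, ∀ x ∈ V, g i x = fderiv ℝ w x (v i) := by
      intro i x hx; simp [hgdef, hV1 x hx]
    have hgfder : ∀ i, ∀ x ∈ S, fderiv ℝ (g i) x
        = (ContinuousLinearMap.apply ℝ ℝ (v i)).comp
            (fderiv ℝ (fun y => fderiv ℝ w y) x) := by
      intro i x hx
      have hEq : g i =ᶠ[𝓝 x] fun y => fderiv ℝ w y (v i) := by
        filter_upwards [hV.mem_nhds (hSV hx)] with y hy
        exact hgS i y hy
      rw [hEq.fderiv_eq, (hD2 t ht x (hSΩ hx) i).fderiv]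
    -- global integrability of a function supported in S
    have globInt : ∀ h : EuclideanSpace ℝ (Fin m) → ℝ,
        (∀ x ∉ S, h x = 0) → IntegrableOn h S → Integrable h := by
      intro h h0 hint
      have hind : Set.indicator S h = h :=
        Set.indicator_eq_self.2 (Function.support_subset_iff'.2 h0)
      rw [← hind]
      exact hint.integrable_indicator hSmeas
    have hfcont : ContinuousOn f Ω₀ :=
      ((hη.continuous.continuousOn.mul hη.continuous.continuousOn).mul hwcont)
    -- the three integrability statements, for each coordinate
    have hInt1 : ∀ i, Integrable (fun x => f x * fderiv ℝ (g i) x (v i)) := by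
      intro i
      apply globInt _ (fun x hx => by rw [hf0 x hx, zero_mul])
      apply IntegrableOn.congr_fun (f := fun x =>
        f x * fderiv ℝ (fun y => fderiv ℝ w y) x (v i) (v i)) ?_ ?_ hSmeas
      · apply ContinuousOn.integrableOn_compact hScomp
        apply ContinuousOn.mono ?_ hSΩ
        exact hfcont.mul
          ((ContinuousLinearMap.apply ℝ ℝ (v i)).continuous.comp_continuousOn
            ((ContinuousLinearMap.apply ℝ (EuclideanSpace ℝ (Fin m) →L[ℝ] ℝ)
              (v i)).continuous.comp_continuousOn (hhesscont t ht)))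
      · intro x hx
        dsimp only
        rw [hgfder i x hx]
        rfl
    have hInt2 : ∀ i, Integrable (fun x => fderiv ℝ f x (v i) * g i x) := by
      intro i
      apply globInt _ (fun x hx => by rw [hfder0 x hx]; simp)
      apply IntegrableOn.congr_fun (f := fun x =>
        ((η x * η x) * fderiv ℝ w x (v i) + w x * (2 * η x * fderiv ℝ η x (v i)))
          * fderiv ℝ w x (v i)) ?_ ?_ hSmeas
      · apply ContinuousOn.integrableOn_compact hScomp
        apply ContinuousOn.mono ?_ hSΩ
        have hDwi : ContinuousOn (fun x => fderiv ℝ w x (v i)) Ω₀ :=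
          (ContinuousLinearMap.apply ℝ ℝ (v i)).continuous.comp_continuousOn (hgradcont t ht)
        have hDηi : Continuous (fun x => fderiv ℝ η x (v i)) :=
          (ContinuousLinearMap.apply ℝ ℝ (v i)).continuous.comp
            (hη.continuous_fderiv (by simp))
        exact (((hη.continuous.continuousOn.mul hη.continuous.continuousOn).mul hDwi).add
          (hwcont.mul ((continuous_const.mul hη.continuous).mul hDηi).continuousOn)).mul hDwi
      · intro x hx
        have hxΩ := hSΩ hx
        dsimp only
        rw [hfD x hxΩ, hgS i x (hSV hx)]
        simp only [ContinuousLinearMap.add_apply, ContinuousLinearMap.smul_apply, smul_eq_mul]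
        ring
    have hInt3 : ∀ i, Integrable (fun x => f x * g i x) := by
      intro i
      apply globInt _ (fun x hx => by rw [hf0 x hx, zero_mul])
      apply ContinuousOn.integrableOn_compact hScomp
      apply ContinuousOn.mono ?_ hSΩ
      exact hfcont.mul (hη₂.continuous.continuousOn.mul
        ((ContinuousLinearMap.apply ℝ ℝ (v i)).continuous.comp_continuousOn (hgradcont t ht)))
    have hibp : ∀ i, ∫ x, f x * fderiv ℝ (g i) x (v i)
        = - ∫ x, fderiv ℝ f x (v i) * g i x := by
      intro i
      exact integral_mul_fderiv_eq_neg_fderiv_mul_of_integrable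
        (hInt2 i) (hInt1 i) (hInt3 i) (fun x _ => hfdiff x) (fun x _ => hgdiff i x)
    -- pointwise bound on S
    have hpt : ∀ x ∈ S, -∑ i : Fin m, fderiv ℝ f x (v i) * g i x ≤ B * u t x ^ 2 := by
      intro x hx
      have hxΩ := hSΩ hx
      have hterm : ∀ i : Fin m, fderiv ℝ f x (v i) * g i x
          = (η x * η x * fderiv ℝ w x (v i) + w x * (2 * η x * fderiv ℝ η x (v i)))
              * fderiv ℝ w x (v i) := by
        intro i
        rw [hfD x hxΩ, hgS i x (hSV hx)]
        simp only [ContinuousLinearMap.add_apply, ContinuousLinearMap.smul_apply, smul_eq_mul]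
        ring
      have hsplit : ∀ i : Fin m,
          -((η x * η x * fderiv ℝ w x (v i) + w x * (2 * η x * fderiv ℝ η x (v i)))
              * fderiv ℝ w x (v i))
          = w x ^ 2 * (fderiv ℝ η x (v i)) ^ 2
            - (η x * fderiv ℝ w x (v i) + w x * fderiv ℝ η x (v i)) ^ 2 := by
        intro i; ring
      calc -∑ i : Fin m, fderiv ℝ f x (v i) * g i x
          = ∑ i : Fin m, (w x ^ 2 * (fderiv ℝ η x (v i)) ^ 2
              - (η x * fderiv ℝ w x (v i) + w x * fderiv ℝ η x (v i)) ^ 2) := by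
            rw [← Finset.sum_neg_distrib]
            exact Finset.sum_congr rfl fun i _ => by rw [hterm i, hsplit i]
      _ = w x ^ 2 * (∑ i : Fin m, (fderiv ℝ η x (v i)) ^ 2)
            - ∑ i : Fin m, (η x * fderiv ℝ w x (v i) + w x * fderiv ℝ η x (v i)) ^ 2 := by
            rw [Finset.sum_sub_distrib, Finset.mul_sum]
      _ ≤ w x ^ 2 * B - 0 := by
            apply sub_le_sub
            · exact mul_le_mul_of_nonneg_left (hB x) (sq_nonneg _)
            · exact Finset.sum_nonneg fun i _ => sq_nonneg _
      _ = B * u t x ^ 2 := by rw [hw]; ring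
    -- assemble
    have hIntSum : Integrable (fun x => ∑ i : Fin m, fderiv ℝ f x (v i) * g i x) :=
      integrable_finset_sum Finset.univ fun i _ => hInt2 i
    calc ∫ x in S, (η x ^ 2 * u t x) * laplacian (u t) x
        = ∫ x in S, ∑ i : Fin m, f x * fderiv ℝ (g i) x (v i) := by
          apply setIntegral_congr_fun hSmeas
          intro x hx
          have hxΩ := hSΩ hx
          dsimp only
          rw [hlap t ht x hxΩ, Finset.mul_sum]
          apply Finset.sum_congr rfl
          intro i _
          rw [hgfder i x hx]
          have : f x = η x ^ 2 * u t x := by rw [hfdef]; dsimp only; rw [hw]; ring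
          rw [this]
          rfl
      _ = ∑ i : Fin m, ∫ x in S, f x * fderiv ℝ (g i) x (v i) :=
          integral_finset_sum Finset.univ fun i _ => (hInt1 i).integrableOn
      _ = ∑ i : Fin m, ∫ x, f x * fderiv ℝ (g i) x (v i) := by
          apply Finset.sum_congr rfl
          intro i _
          exact setIntegral_eq_integral_of_forall_compl_eq_zero
            fun x hx => by rw [hf0 x hx, zero_mul]
      _ = ∑ i : Fin m, -∫ x, fderiv ℝ f x (v i) * g i x :=
          Finset.sum_congr rfl fun i _ => hibp i
      _ = -∫ x, ∑ i : Fin m, fderiv ℝ f x (v i) * g i x := by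
          rw [Finset.sum_neg_distrib, ← integral_finset_sum Finset.univ fun i _ => hInt2 i]
      _ = -∫ x in S, ∑ i : Fin m, fderiv ℝ f x (v i) * g i x := by
          rw [setIntegral_eq_integral_of_forall_compl_eq_zero
            fun x hx => Finset.sum_eq_zero fun i _ => by rw [hfder0 x hx]; simp]
      _ = ∫ x in S, -∑ i : Fin m, fderiv ℝ f x (v i) * g i x := by rw [integral_neg]
      _ ≤ ∫ x in S, B * u t x ^ 2 := by
          apply setIntegral_mono_on (hIntSum.integrableOn.neg) ((hu2int t).const_mul B) hSmeas hpt
      _ = B * ∫ x in S, u t x ^ 2 := integral_const_mul B _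
  haveI hSfin : IsFiniteMeasure (volume.restrict S) := by
    constructor
    rw [Measure.restrict_apply_univ]
    exact hScomp.measure_lt_top
  -- derivative of F for positive times
  have hFderiv : ∀ t : ℝ, 0 < t → HasDerivAt F
      (∫ x in S, 2 * η x ^ 2 * u t x * deriv (fun s => u s x) t) t := by
    intro t₀ ht₀
    have hboxcomp : IsCompact ((Icc (t₀/2) (3*t₀/2)) ×ˢ S) := isCompact_Icc.prod hScomp
    have hboxsub : (Icc (t₀/2) (3*t₀/2)) ×ˢ S ⊆ (Ioi 0) ×ˢ Ω₀ := by
      rintro ⟨s, x⟩ ⟨hs, hx⟩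
      exact ⟨lt_of_lt_of_le (by linarith : (0:ℝ) < t₀/2) hs.1, hSΩ hx⟩
    have hcontbox : ContinuousOn (fun p : ℝ × EuclideanSpace ℝ (Fin m) =>
        2 * η p.2 ^ 2 * u p.1 p.2 * deriv (fun s => u s p.2) p.1)
        ((Icc (t₀/2) (3*t₀/2)) ×ˢ S) := by
      apply ContinuousOn.mul
      · apply ContinuousOn.mul
        · exact (continuous_const.mul ((hη.continuous.comp continuous_snd).pow 2)).continuousOn
        · exact (hu.cont.mono (fun p hp => ⟨(le_of_lt (hboxsub hp).1 : (0:ℝ) ≤ p.1), (hboxsub hp).2⟩)).mono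
            (fun p hp => hp)
      · exact hu.cont_dt.mono hboxsub
    obtain ⟨C, hC⟩ := hboxcomp.exists_bound_of_continuousOn hcontbox
    have hballsub : ∀ s ∈ Metric.ball t₀ (t₀/2), s ∈ Icc (t₀/2) (3*t₀/2) ∧ 0 < s := by
      intro s hs
      rw [Metric.mem_ball, Real.dist_eq, abs_lt] at hs
      exact ⟨⟨by linarith [hs.1], by linarith [hs.2]⟩, by linarith [hs.1]⟩
    have hres := hasDerivAt_integral_of_dominated_loc_of_deriv_le
      (μ := volume.restrict S)
      (F := fun t x => η x ^ 2 * u t x ^ 2)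
      (F' := fun t x => 2 * η x ^ 2 * u t x * deriv (fun s => u s x) t)
      (x₀ := t₀) (bound := fun _ => C)
      (s := Metric.ball t₀ (t₀/2)) (Metric.ball_mem_nhds _ (by positivity))
      ?_ (hFint t₀) ?_ ?_ (integrable_const C) ?_
    · exact hres.2
    · filter_upwards [isOpen_Ioi.mem_nhds ht₀] with t htpos
      apply ContinuousOn.aestronglyMeasurable ?_ hSmeas
      exact ((hη.continuous.continuousOn.pow 2).mul
        (((hucont t (le_of_lt htpos)).mono hSΩ).pow 2)).mono (fun x hx => hx)
    · apply ContinuousOn.aestronglyMeasurable ?_ hSmeas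
      apply ContinuousOn.mono ?_ hSΩ
      exact ((continuous_const.mul (hη.continuous.pow 2)).continuousOn.mul
        (hucont t₀ ht₀.le)).mul (hdtcont t₀ ht₀)
    · apply (ae_restrict_iff' hSmeas).2
      apply ae_of_all
      intro x hx t htb
      have := hC (t, x) ⟨(hballsub t htb).1, hx⟩
      simpa using this
    · apply (ae_restrict_iff' hSmeas).2
      apply ae_of_all
      intro x hx t htb
      have hd : HasDerivAt (fun s => u s x) (deriv (fun s => u s x) t) t :=
        (hu.diff_t t (hballsub t htb).2 x (hSΩ hx)).hasDerivAt
      have := ((hd.fun_pow 2).const_mul (η x ^ 2))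
      refine this.congr_deriv ?_
      norm_num
      ring
  -- continuity of F on [0, ∞)
  have hFcont : ContinuousOn F (Ici 0) := by
    intro t₀ ht₀
    have hboxcomp : IsCompact ((Icc (0:ℝ) (t₀+1)) ×ˢ S) := isCompact_Icc.prod hScomp
    have hboxsub : (Icc (0:ℝ) (t₀+1)) ×ˢ S ⊆ (Ici 0) ×ˢ Ω₀ := by
      rintro ⟨s, x⟩ ⟨hs, hx⟩
      exact ⟨hs.1, hSΩ hx⟩
    have hcontbox : ContinuousOn (fun p : ℝ × EuclideanSpace ℝ (Fin m) =>
        η p.2 ^ 2 * u p.1 p.2 ^ 2) ((Icc (0:ℝ) (t₀+1)) ×ˢ S) := by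
      exact ((hη.continuous.comp continuous_snd).pow 2).continuousOn.mul
        ((hu.cont.mono hboxsub).pow 2)
    obtain ⟨C, hC⟩ := hboxcomp.exists_bound_of_continuousOn hcontbox
    apply continuousWithinAt_of_dominated (bound := fun _ => C)
    · filter_upwards [self_mem_nhdsWithin] with t ht
      apply ContinuousOn.aestronglyMeasurable ?_ hSmeas
      exact ((hη.continuous.continuousOn.pow 2).mul
        (((hucont t ht).mono hSΩ).pow 2)).mono (fun x hx => hx)
    · have hIic : Iic (t₀+1) ∈ 𝓝[Ici 0] t₀ :=
        nhdsWithin_le_nhds (Iic_mem_nhds (by linarith [mem_Ici.1 ht₀]))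
      filter_upwards [self_mem_nhdsWithin, hIic] with t ht1 ht2
      apply (ae_restrict_iff' hSmeas).2
      apply ae_of_all
      intro x hx
      have := hC (t, x) ⟨⟨ht1, ht2⟩, hx⟩
      simpa using this
    · exact integrable_const C
    · apply (ae_restrict_iff' hSmeas).2
      apply ae_of_all
      intro x hx
      have hxΩ := hSΩ hx
      have hucw : ContinuousWithinAt (fun t => u t x) (Ici 0) t₀ := by
        have hpair : ContinuousWithinAt (fun t : ℝ => ((t, x) : ℝ × EuclideanSpace ℝ (Fin m)))
            (Ici 0) t₀ := (continuous_id.prodMk continuous_const).continuousWithinAt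
        have hco : (fun t => u t x) = (fun p : ℝ × EuclideanSpace ℝ (Fin m) => u p.1 p.2)
            ∘ (fun t : ℝ => (t, x)) := rfl
        rw [hco]
        exact ContinuousWithinAt.comp (hu.cont (t₀, x) ⟨ht₀, hxΩ⟩) hpair
          (fun t ht => ⟨ht, hxΩ⟩)
      exact continuousWithinAt_const.mul (hucw.pow 2)
  -- F vanishes at time 0
  have hF0 : F 0 = 0 := by
    rw [hF]
    dsimp only
    rw [setIntegral_congr_fun hSmeas (g := fun _ => (0:ℝ))
      (fun x hx => by rw [h0 x (hSΩ hx)]; ring)]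
    simp
  -- upper bound for the derivative
  have hFub : ∀ t : ℝ, 0 < t →
      (∫ x in S, 2 * η x ^ 2 * u t x * deriv (fun s => u s x) t)
        ≤ 2*B*Q - 2*lam * F t := by
    intro t ht
    have hIntA : IntegrableOn (fun x => (η x ^ 2 * u t x) * laplacian (u t) x) S := by
      apply ContinuousOn.integrableOn_compact hScomp
      apply ContinuousOn.mono ?_ hSΩ
      exact ((hη.continuous.continuousOn.pow 2).mul (hucont t ht.le)).mul (hlapcont t ht)
    have hsplit : EqOn (fun x => 2 * η x ^ 2 * u t x * deriv (fun s => u s x) t)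
        (fun x => 2 * ((η x ^ 2 * u t x) * laplacian (u t) x) - 2*lam*(η x ^ 2 * u t x ^ 2)) S := by
      intro x hx
      dsimp only
      rw [hu.eqn t ht x (hSΩ hx)]
      ring
    rw [setIntegral_congr_fun hSmeas hsplit]
    rw [integral_sub (hIntA.const_mul 2) ((hFint t).const_mul (2*lam))]
    rw [integral_const_mul, integral_const_mul]
    have hSQ : ∫ x in S, u t x ^ 2 ≤ Q := by
      refine le_trans ?_ (hQ t ht.le)
      apply setIntegral_mono_set ((hu.sq_integrable t).mono_set hDΩ)
        (ae_of_all _ fun x => sq_nonneg _) (HasSubset.Subset.eventuallyLE hsupp)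
    have h1 : ∫ x in S, (η x ^ 2 * u t x) * laplacian (u t) x ≤ B * Q := by
      refine le_trans (key t ht) ?_
      exact mul_le_mul_of_nonneg_left hSQ hB0
    have hFF : (∫ x in S, η x ^ 2 * u t x ^ 2) = F t := rfl
    rw [hFF]
    nlinarith [h1]
  -- Gronwall-type argument
  intro t htnn
  set c : ℝ := B * Q / lam with hc
  have hc0 : 0 ≤ c := by positivity
  rcases eq_or_lt_of_le htnn with rfl|ht
  · calc F 0 = 0 := hF0
    _ ≤ c := hc0
  · set H : ℝ → ℝ := fun s => Real.exp (2*lam*s) * (F s - c) with hH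
    have hanti : AntitoneOn H (Icc 0 t) := by
      apply antitoneOn_of_deriv_nonpos (convex_Icc 0 t)
      · apply ContinuousOn.mul
        · exact (Real.continuous_exp.comp (continuous_const.mul continuous_id)).continuousOn
        · exact ((hFcont.mono (fun s hs => hs.1)).sub continuousOn_const)
      · intro s hs
        rw [interior_Icc] at hs
        have hds : HasDerivAt H
            (Real.exp (2*lam*s) * (2*lam) * (F s - c)
              + Real.exp (2*lam*s) * (∫ x in S, 2 * η x ^ 2 * u s x * deriv (fun r => u r x) s)) s := by
          have hlin : HasDerivAt (fun r : ℝ => 2*lam*r) (2*lam) s := by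
            simpa using (hasDerivAt_id s).const_mul (2*lam)
          exact (hlin.exp.mul ((hFderiv s hs.1).sub_const c))
        exact hds.differentiableAt.differentiableWithinAt
      · intro s hs
        rw [interior_Icc] at hs
        have hds : HasDerivAt H
            (Real.exp (2*lam*s) * (2*lam) * (F s - c)
              + Real.exp (2*lam*s) * (∫ x in S, 2 * η x ^ 2 * u s x * deriv (fun r => u r x) s)) s := by
          have hlin : HasDerivAt (fun r : ℝ => 2*lam*r) (2*lam) s := by
            simpa using (hasDerivAt_id s).const_mul (2*lam)
          exact (hlin.exp.mul ((hFderiv s hs.1).sub_const c))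
        rw [hds.deriv]
        have hub := hFub s hs.1
        have hcl : lam * c = B * Q := by
          rw [hc]; field_simp
        have hexp := Real.exp_pos (2*lam*s)
        nlinarith [hub, hexp, mul_le_mul_of_nonneg_left hub hexp.le]
    have hHt : H t ≤ H 0 := hanti ⟨le_rfl, ht.le⟩ ⟨ht.le, le_rfl⟩ ht.le
    have hH0 : H 0 = -c := by
      rw [hH]
      dsimp only
      rw [hF0]
      simp
    rw [hH0] at hHt
    have hexp := Real.exp_pos (2*lam*t)
    have : Real.exp (2*lam*t) * (F t - c) ≤ -c := hHt
    nlinarith [hexp, hc0]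


lemma mem_cthick_iff {s : Set (EuclideanSpace ℝ (Fin m))} (hs : s.Nonempty) {δ : ℝ}
    (hδ : 0 ≤ δ) {x : EuclideanSpace ℝ (Fin m)} :
    x ∈ cthickening δ s ↔ infDist x s ≤ δ := by
  rw [mem_cthickening_iff, infDist,
    ← ENNReal.le_ofReal_iff_toReal_le (Metric.infEdist_ne_top hs) hδ]

lemma exists_cutoff (C : Set (EuclideanSpace ℝ (Fin m))) (hC : C.Nonempty)
    (σ : ℝ) (hσ : 0 < σ) :
    ∃ η : EuclideanSpace ℝ (Fin m) → ℝ,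
      ContDiff ℝ (⊤:ℕ∞) η ∧ (∀ x, 0 ≤ η x) ∧ (∀ x, η x ≤ 1) ∧
      (∀ x ∈ cthickening (σ/8) C, η x = 1) ∧
      tsupport η ⊆ cthickening σ C ∧
      ∀ x, ‖fderiv ℝ η x‖ ≤ 2/σ := by
  classical
  set d : EuclideanSpace ℝ (Fin m) → ℝ := fun x => infDist x C with hd
  set g : EuclideanSpace ℝ (Fin m) → ℝ :=
    fun x => max 0 (min 1 ((3*σ/4 - d x) * (2/σ))) with hg
  have hglip : ∀ x y, |g x - g y| ≤ (2/σ) * dist x y := by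
    intro x y
    have h1 : |g x - g y| ≤ |(3*σ/4 - d x) * (2/σ) - (3*σ/4 - d y) * (2/σ)| := by
      have ha := abs_max_sub_max_le_max (0:ℝ) (min 1 ((3*σ/4 - d x) * (2/σ)))
        (0:ℝ) (min 1 ((3*σ/4 - d y) * (2/σ)))
      have hb := abs_min_sub_min_le_max (1:ℝ) ((3*σ/4 - d x) * (2/σ)) (1:ℝ)
        ((3*σ/4 - d y) * (2/σ))
      simp only [sub_self, abs_zero] at ha hb
      rw [sup_eq_right.2 (abs_nonneg _)] at ha hb
      exact ha.trans hb
    have h2 : |(3*σ/4 - d x) * (2/σ) - (3*σ/4 - d y) * (2/σ)| = (2/σ) * |d y - d x| := by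
      rw [← sub_mul, abs_mul, abs_of_pos (by positivity : (0:ℝ) < 2/σ), mul_comm]
      congr 1
      rw [show 3*σ/4 - d x - (3*σ/4 - d y) = d y - d x by ring]
    have h3 : |d y - d x| ≤ dist x y := by
      rw [abs_sub_le_iff]
      constructor
      · calc d y - d x ≤ (d x + dist y x) - d x := by
              have : d y ≤ d x + dist y x := infDist_le_infDist_add_dist
              linarith
        _ = dist x y := by rw [dist_comm]; ring
      · calc d x - d y ≤ (d y + dist x y) - d y := by
              have : d x ≤ d y + dist x y := infDist_le_infDist_add_dist
              linarith
        _ = dist x y := by ring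
    calc |g x - g y| ≤ (2/σ) * |d y - d x| := h1.trans_eq h2
    _ ≤ (2/σ) * dist x y := mul_le_mul_of_nonneg_left h3 (by positivity)
  have hgLip : LipschitzWith (2/σ).toNNReal g := by
    refine LipschitzWith.of_dist_le_mul fun x y => ?_
    rw [Real.dist_eq, Real.coe_toNNReal _ (by positivity : (0:ℝ) ≤ 2/σ)]
    exact hglip x y
  have hgcont : Continuous g := hgLip.continuous
  have hg0 : ∀ x, 0 ≤ g x := fun x => le_max_left _ _
  have hg1 : ∀ x, g x ≤ 1 := fun x => max_le zero_le_one (min_le_left _ _)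
  have hgone : ∀ x, d x ≤ σ/4 → g x = 1 := by
    intro x hx
    have : (1:ℝ) ≤ (3*σ/4 - d x) * (2/σ) := by
      have h5 : σ/2 ≤ 3*σ/4 - d x := by linarith
      calc (1:ℝ) = (σ/2) * (2/σ) := by field_simp
      _ ≤ (3*σ/4 - d x) * (2/σ) := mul_le_mul_of_nonneg_right h5 (by positivity)
    simp only [hg]
    rw [min_eq_left this, max_eq_right zero_le_one]
  have hgzero : ∀ x, 3*σ/4 ≤ d x → g x = 0 := by
    intro x hx
    have h4 : (3*σ/4 - d x) * (2/σ) ≤ 0 := by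
      apply mul_nonpos_of_nonpos_of_nonneg (by linarith) (by positivity)
    simp only [hg]
    rw [max_eq_left ((min_le_right _ _).trans h4)]
  -- mollify
  set φ : ContDiffBump (0 : EuclideanSpace ℝ (Fin m)) :=
    ⟨σ/16, σ/8, by positivity, by linarith⟩ with hφ
  set η : EuclideanSpace ℝ (Fin m) → ℝ :=
    convolution (φ.normed volume) g (ContinuousLinearMap.lsmul ℝ ℝ) volume with hη
  have hηsmooth : ContDiff ℝ ((⊤:ℕ∞):WithTop ℕ∞) η :=
    HasCompactSupport.contDiff_convolution_left _ φ.hasCompactSupport_normed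
      (φ.contDiff_normed (n := ⊤)) (hgcont.locallyIntegrable)
  have hηdef : ∀ x, η x = ∫ t, φ.normed volume t * g (x - t) := by
    intro x
    simp only [hη, convolution_def, ContinuousLinearMap.lsmul_apply, smul_eq_mul]
  have hint : ∀ x, Integrable (fun t => φ.normed volume t * g (x - t)) volume := by
    intro x
    apply Continuous.integrable_of_hasCompactSupport
    · exact φ.continuous_normed.mul (hgcont.comp (continuous_const.sub continuous_id))
    · exact φ.hasCompactSupport_normed.mul_right
  have hη0 : ∀ x, 0 ≤ η x := by
    intro x
    rw [hηdef]
    exact integral_nonneg fun t => mul_nonneg (φ.nonneg_normed t) (hg0 _)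
  have hη1 : ∀ x, η x ≤ 1 := by
    intro x
    rw [hηdef]
    calc ∫ t, φ.normed volume t * g (x - t) ≤ ∫ t, φ.normed volume t := by
          apply integral_mono (hint x) φ.integrable_normed
          intro t
          calc φ.normed volume t * g (x - t) ≤ φ.normed volume t * 1 :=
                mul_le_mul_of_nonneg_left (hg1 _) (φ.nonneg_normed t)
          _ = φ.normed volume t := mul_one _
    _ = 1 := φ.integral_normed
  have hηlip : ∀ x y, |η x - η y| ≤ (2/σ) * dist x y := by
    intro x y
    rw [hηdef, hηdef, ← integral_sub (hint x) (hint y)]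
    have heq : ∀ t, φ.normed volume t * g (x - t) - φ.normed volume t * g (y - t)
        = φ.normed volume t * (g (x - t) - g (y - t)) := fun t => by ring
    simp_rw [heq]
    calc |∫ t, φ.normed volume t * (g (x - t) - g (y - t))|
        ≤ ∫ t, |φ.normed volume t * (g (x - t) - g (y - t))| := by
          simpa [Real.norm_eq_abs, abs_mul] using
            norm_integral_le_integral_norm (μ := volume)
              (fun t => φ.normed volume t * (g (x - t) - g (y - t)))
    _ ≤ ∫ t, φ.normed volume t * ((2/σ) * dist x y) := by
        apply integral_mono _ (φ.integrable_normed.mul_const _)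
        · intro t
          dsimp only
          rw [abs_mul, abs_of_nonneg (φ.nonneg_normed t)]
          apply mul_le_mul_of_nonneg_left _ (φ.nonneg_normed t)
          have := hglip (x - t) (y - t)
          rwa [dist_sub_right] at this
        · apply Integrable.abs
          rw [← funext heq]
          exact (hint x).sub (hint y)
    _ = (2/σ) * dist x y := by
        rw [integral_mul_const, φ.integral_normed, one_mul]
  have hηLip : LipschitzWith (2/σ).toNNReal η := by
    refine LipschitzWith.of_dist_le_mul fun x y => ?_
    rw [Real.dist_eq, Real.coe_toNNReal _ (by positivity : (0:ℝ) ≤ 2/σ)]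
    exact hηlip x y
  have hfb : ∀ x, ‖fderiv ℝ η x‖ ≤ 2/σ := by
    intro x
    have := norm_fderiv_le_of_lipschitz ℝ hηLip (x₀ := x)
    rwa [Real.coe_toNNReal _ (by positivity : (0:ℝ) ≤ 2/σ)] at this
  have hrOut : φ.rOut = σ/8 := rfl
  refine ⟨η, hηsmooth, hη0, hη1, ?_, ?_, hfb⟩
  · intro x₀ hx₀
    rw [mem_cthick_iff hC (by positivity)] at hx₀
    have h1 : ∀ x ∈ ball x₀ φ.rOut, g x = g x₀ := by
      intro x hx
      rw [mem_ball, hrOut] at hx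
      have hdx : d x ≤ σ/4 := by
        calc d x ≤ d x₀ + dist x x₀ := infDist_le_infDist_add_dist
        _ ≤ σ/8 + σ/8 := by exact add_le_add hx₀ hx.le
        _ = σ/4 := by ring
      rw [hgone x hdx, hgone x₀ (by linarith)]
    have := φ.normed_convolution_eq_right (μ := volume) h1
    rw [hη, this, hgone x₀ (by linarith)]
  · have hsupp : Function.support η ⊆ cthickening σ C := by
      intro x₀ hx₀
      by_contra hmem
      rw [mem_cthick_iff hC hσ.le, not_le] at hmem
      apply hx₀
      have h1 : ∀ x ∈ ball x₀ φ.rOut, g x = g x₀ := by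
        intro x hx
        rw [mem_ball, hrOut] at hx
        have hdx : 3*σ/4 ≤ d x := by
          have := infDist_le_infDist_add_dist (x := x₀) (y := x) (s := C)
          have hd' : dist x₀ x < σ/8 := by rwa [dist_comm]
          simp only [hd] at *
          linarith
        rw [hgzero x hdx, hgzero x₀ (by linarith)]
      have := φ.normed_convolution_eq_right (μ := volume) h1
      rw [hη, this, hgzero x₀ (by linarith)]
    exact (closure_minimal hsupp (isClosed_cthickening))


lemma sum_sq_apply_le {m : ℕ} (L : EuclideanSpace ℝ (Fin m) →L[ℝ] ℝ) :
    ∑ i : Fin m, (L (EuclideanSpace.single i 1))^2 ≤ ‖L‖^2 := by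
  classical
  set S : ℝ := ∑ i : Fin m, (L (EuclideanSpace.single i 1))^2 with hS
  have hS0 : 0 ≤ S := Finset.sum_nonneg fun i _ => sq_nonneg _
  set w : EuclideanSpace ℝ (Fin m) :=
    ∑ i : Fin m, (L (EuclideanSpace.single i 1)) • EuclideanSpace.single i 1 with hw
  have hLw : L w = S := by
    rw [hw, map_sum]
    simp only [_root_.map_smul, smul_eq_mul, hS, sq]
  have hwnorm : ‖w‖ = Real.sqrt S := by
    have hcoord : ∀ j, w j = L (EuclideanSpace.single j 1) := by
      intro j
      rw [hw]
      have : (∑ i : Fin m, (L (EuclideanSpace.single i 1)) • EuclideanSpace.single i 1) j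
          = ∑ i : Fin m, (L (EuclideanSpace.single i 1)) * (EuclideanSpace.single i 1 : EuclideanSpace ℝ (Fin m)) j := by
        rw [WithLp.ofLp_sum, Finset.sum_apply]
        rfl
      rw [this]
      simp [EuclideanSpace.single_apply]
    rw [EuclideanSpace.norm_eq]
    congr 1
    rw [hS]
    apply Finset.sum_congr rfl
    intro j _
    rw [hcoord j, Real.norm_eq_abs, sq_abs]
  have hle : S ≤ ‖L‖ * Real.sqrt S := by
    calc S = L w := hLw.symm
    _ ≤ ‖L‖ * ‖w‖ := by
        have := L.le_opNorm w
        calc L w ≤ |L w| := le_abs_self _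
        _ = ‖L w‖ := (Real.norm_eq_abs _).symm
        _ ≤ ‖L‖ * ‖w‖ := this
    _ = ‖L‖ * Real.sqrt S := by rw [hwnorm]
  nlinarith [Real.sq_sqrt hS0, Real.sqrt_nonneg S, norm_nonneg L]


set_option maxHeartbeats 2000000 in
/-- **Sub-exponential decay in the obstacle, L∞-in-time form (Theorem 1 of the paper,
PDE-interior form).**  Let `u` solve `∂ₜu = Δu − λu` on `(0,∞) × Ω₀` with `λ > 0` and
`u(0,·) = 0` on `Ω₀`, and let `M` bound `∫_{Ω₀} u(t)²` for all `t ≥ 0`. Let `K ⊆ Ω₀` be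
compact, `a > 0` with the closed `a`-neighbourhood `K_a ⊆ Ω₀`, and `0 < γ < 1`,
`0 < ν < 1/2`. Then for every `λ ≥ max(1, (16e/(γ²a²))^{1/(1−2ν)})`,
`sup_{t ≥ 0} ∫_K u(t)² ≤ e^{−λ^ν} M`. -/
theorem subexponential_decay_Linfty {m : ℕ} (hm : 1 ≤ m)
    (Ω₀ : Set (EuclideanSpace ℝ (Fin m))) (hΩ₀ : IsOpen Ω₀)
    (K : Set (EuclideanSpace ℝ (Fin m))) (hK : IsCompact K)
    (a : ℝ) (ha : 0 < a) (hKa : Metric.cthickening a K ⊆ Ω₀)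
    (γ ν : ℝ) (hγ0 : 0 < γ) (hγ1 : γ < 1) (hν0 : 0 < ν) (hν : ν < 1 / 2)
    (lam : ℝ)
    (hlam : max 1 ((16 * Real.exp 1 / (γ ^ 2 * a ^ 2)) ^ (1 / (1 - 2 * ν))) ≤ lam)
    (u : ℝ → EuclideanSpace ℝ (Fin m) → ℝ) (hu : IsClassicalSolution Ω₀ lam u)
    (h0 : ∀ x ∈ Ω₀, u 0 x = 0)
    (M : ℝ) (hM : ∀ t : ℝ, 0 ≤ t → ∫ x in Ω₀, (u t x) ^ 2 ≤ M) :
    ∀ t : ℝ, 0 ≤ t → ∫ x in K, (u t x) ^ 2 ≤ Real.exp (-lam ^ ν) * M := by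
  classical
  have hM0 : 0 ≤ M :=
    le_trans (setIntegral_nonneg hΩ₀.measurableSet fun x _ => sq_nonneg _) (hM 0 le_rfl)
  rcases K.eq_empty_or_nonempty with rfl|hKne
  · intro t ht
    rw [setIntegral_empty]
    positivity
  intro t ht
  have hlam1 : (1:ℝ) ≤ lam := le_trans (le_max_left _ _) hlam
  have hlam0 : 0 < lam := by linarith
  set N : ℕ := ⌈lam ^ ν⌉₊ with hNdef
  have hlv1 : (1:ℝ) ≤ lam ^ ν := by
    calc (1:ℝ) = (1:ℝ) ^ ν := (Real.one_rpow ν).symm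
    _ ≤ lam ^ ν := Real.rpow_le_rpow zero_le_one hlam1 hν0.le
  have hNge : lam ^ ν ≤ (N:ℝ) := Nat.le_ceil _
  have hNposR : (0:ℝ) < N := lt_of_lt_of_le (by linarith) hNge
  have hNne : (N:ℝ) ≠ 0 := ne_of_gt hNposR
  have hNle : (N:ℝ) ≤ 2 * lam ^ ν := by
    have h1 := Nat.ceil_lt_add_one (show (0:ℝ) ≤ lam ^ ν by positivity)
    have : (N:ℝ) < lam ^ ν + 1 := h1
    linarith
  set σ : ℝ := a / N with hσdef
  have hσ0 : 0 < σ := by positivity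
  have hKacomp : IsCompact (cthickening a K) := hK.cthickening
  obtain ⟨ρ, hρ0, hρsub⟩ := hKacomp.exists_cthickening_subset_open hΩ₀ hKa
  have hKane : (cthickening a K).Nonempty := hKne.mono (self_subset_cthickening _)
  obtain ⟨η₂, hη₂s, hη₂0, hη₂le1, hη₂one, hη₂supp, hη₂fb⟩ :=
    exists_cutoff (cthickening a K) hKane ρ hρ0
  set V : Set (EuclideanSpace ℝ (Fin m)) := thickening (ρ/8) (cthickening a K) with hVdef
  have hVopen : IsOpen V := isOpen_thickening
  have hV1 : ∀ x ∈ V, η₂ x = 1 := fun x hx => hη₂one x (thickening_subset_cthickening _ _ hx)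
  have hη₂Ω : tsupport η₂ ⊆ Ω₀ := hη₂supp.trans hρsub
  set E : ℕ → Set (EuclideanSpace ℝ (Fin m)) := fun k => cthickening (a - k * σ) K with hEdef
  have hEsub : ∀ k : ℕ, E k ⊆ Ω₀ := by
    intro k
    refine le_trans (cthickening_mono ?_ K) hKa
    have : (0:ℝ) ≤ k * σ := by positivity
    linarith
  have hEne : ∀ k : ℕ, (E k).Nonempty := fun k => hKne.mono (self_subset_cthickening _)
  have hEmeas : ∀ k : ℕ, MeasurableSet (E k) := fun k => isClosed_cthickening.measurableSet
  have hrad : ∀ k : ℕ, k ≤ N → 0 ≤ a - k * σ := by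
    intro k hk
    have h1 : (k:ℝ) * σ ≤ N * σ := by
      apply mul_le_mul_of_nonneg_right _ hσ0.le
      exact_mod_cast hk
    have h2 : (N:ℝ) * σ = a := by
      rw [hσdef]; field_simp
    linarith
  set Bc : ℝ := (2/σ)^2 with hBcdef
  have hBc0 : 0 ≤ Bc := sq_nonneg _
  -- the inductive decay estimate
  have main : ∀ k : ℕ, k ≤ N → ∀ s : ℝ, 0 ≤ s →
      ∫ x in E k, (u s x)^2 ≤ (Bc/lam)^k * M := by
    intro k
    induction k with
    | zero =>
      intro _ s hs
      simp only [pow_zero, one_mul]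
      refine le_trans ?_ (hM s hs)
      apply setIntegral_mono_set (hu.sq_integrable s)
        (ae_of_all _ fun x => sq_nonneg _)
        (HasSubset.Subset.eventuallyLE (hEsub 0))
    | succ k ih =>
      intro hk1 s hs
      have hk : k ≤ N := le_of_lt (Nat.lt_of_succ_le hk1)
      obtain ⟨η, hηs, hη0, hη1, hηone, hηsupp, hηfb⟩ :=
        exists_cutoff (E (k+1)) (hEne (k+1)) σ hσ0
      have hsup2 : tsupport η ⊆ E k := by
        refine hηsupp.trans ?_
        refine le_trans (cthickening_cthickening_subset hσ0.le (hrad (k+1) hk1) K) ?_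
        apply cthickening_mono _ K
        push_cast
        ring_nf
        exact le_refl _
      have hηcomp : HasCompactSupport η := by
        have hc1 : IsCompact (E (k+1)) := hK.cthickening
        apply HasCompactSupport.of_support_subset_isCompact hc1.cthickening
        exact (subset_tsupport η).trans hηsupp
      have hSV : tsupport η ⊆ V := by
        refine (hsup2.trans ?_)
        refine le_trans ?_ (self_subset_thickening (by positivity) _)
        apply cthickening_mono _ K
        have : (0:ℝ) ≤ k * σ := by positivity
        linarith
      have hBineq : ∀ x, ∑ i : Fin m, (fderiv ℝ η x (EuclideanSpace.single i 1))^2 ≤ Bc := by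
        intro x
        refine (sum_sq_apply_le (fderiv ℝ η x)).trans ?_
        rw [hBcdef]
        apply pow_le_pow_left₀ (norm_nonneg _) (hηfb x)
      have hstep := energy_step Ω₀ hΩ₀ lam hlam0 u hu h0 η η₂ V hVopen hηs hηcomp hη0 hη1
        hη₂s hη₂Ω hSV hV1 (E k) (hEmeas k) (hEsub k) hsup2 Bc ((Bc/lam)^k * M) hBineq (ih hk)
      have hE1supp : E (k+1) ⊆ tsupport η := by
        intro x hx
        apply subset_tsupport η
        rw [Function.mem_support, hηone x (self_subset_cthickening _ hx)]
        norm_num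
      have hTint : IntegrableOn (fun x => η x ^ 2 * u s x ^ 2) (tsupport η) := by
        apply Integrable.bdd_mul ((hu.sq_integrable s).mono_set (hsup2.trans (hEsub k)))
        · exact ((hηs.continuous.aestronglyMeasurable).pow 2).restrict
        · exact ae_of_all _ fun x => show ‖η x ^ 2‖ ≤ 1 by
            rw [Real.norm_eq_abs, abs_of_nonneg (sq_nonneg _)]
            nlinarith [hη0 x, hη1 x]
      calc ∫ x in E (k+1), u s x ^ 2 = ∫ x in E (k+1), η x ^ 2 * u s x ^ 2 := by
            apply setIntegral_congr_fun (hEmeas (k+1))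
            intro x hx
            dsimp only
            rw [hηone x (self_subset_cthickening _ hx)]
            ring
      _ ≤ ∫ x in tsupport η, η x ^ 2 * u s x ^ 2 := by
            apply setIntegral_mono_set hTint
              (ae_of_all _ fun x => by positivity)
              (HasSubset.Subset.eventuallyLE hE1supp)
      _ ≤ Bc * ((Bc/lam)^k * M) / lam := hstep s hs
      _ = (Bc/lam)^(k+1) * M := by
            rw [pow_succ]
            ring
  -- identification of the innermost set
  have hEN : E N = K := by
    have hz : a - N * σ = 0 := by
      rw [hσdef]
      field_simp
      ring
    rw [hEdef]
    dsimp only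
    rw [hz, cthickening_zero, hK.isClosed.closure_eq]
  -- arithmetic: the per-layer factor is at most exp(-1)
  have hcond : 16 * Real.exp 1 / (γ^2 * a^2) ≤ lam ^ (1 - 2*ν) := by
    have h := le_trans (le_max_right (1:ℝ) _) hlam
    have hbase : (0:ℝ) ≤ 16 * Real.exp 1 / (γ ^ 2 * a ^ 2) := by positivity
    have h2 := Real.rpow_le_rpow (Real.rpow_nonneg hbase _) h
      (by linarith : (0:ℝ) ≤ 1 - 2*ν)
    rwa [← Real.rpow_mul hbase, one_div,
      inv_mul_cancel₀ (by linarith : (1:ℝ) - 2*ν ≠ 0), Real.rpow_one] at h2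
  have hq : Bc / lam ≤ Real.exp (-1) := by
    have hY0 : (0:ℝ) < lam ^ (2*ν) := Real.rpow_pos_of_pos hlam0 _
    have hsq : (lam ^ ν)^2 = lam ^ (2*ν) := by
      rw [sq, ← Real.rpow_add hlam0]; ring_nf
    have hmul : lam ^ (1-2*ν) * lam ^ (2*ν) = lam := by
      rw [← Real.rpow_add hlam0]; norm_num
    have hexp1 : (0:ℝ) < Real.exp 1 := Real.exp_pos 1
    have hγle : γ^2 ≤ 1 := by nlinarith
    have h16 : 16 * Real.exp 1 ≤ a^2 * lam ^ (1-2*ν) := by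
      rw [div_le_iff₀ (by positivity)] at hcond
      calc 16 * Real.exp 1 ≤ lam ^ (1-2*ν) * (γ^2 * a^2) := hcond
      _ = (lam ^ (1-2*ν) * a^2) * γ^2 := by ring
      _ ≤ (lam ^ (1-2*ν) * a^2) * 1 := by
          apply mul_le_mul_of_nonneg_left hγle
          positivity
      _ = a^2 * lam ^ (1-2*ν) := by ring
    have hN2 : (N:ℝ)^2 ≤ 4 * lam ^ (2*ν) := by nlinarith [hNge, hlv1]
    have hσval : Bc = 4 * (N:ℝ)^2 / a^2 := by
      rw [hBcdef, hσdef]; field_simp; ring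
    rw [Real.exp_neg, hσval, inv_eq_one_div, div_le_div_iff₀ hlam0 hexp1]
    have key1 : 4*(N:ℝ)^2*Real.exp 1 ≤ 16*(lam ^ (2*ν))*Real.exp 1 := by
      nlinarith [hN2, hexp1]
    have key2 : 16*Real.exp 1*(lam ^ (2*ν)) ≤ a^2 * lam := by
      have h3 := mul_le_mul_of_nonneg_right h16 hY0.le
      nlinarith [h3, hmul]
    have ha2 : (0:ℝ) < a^2 := by positivity
    rw [div_mul_eq_mul_div, div_le_iff₀ ha2]
    nlinarith [key1, key2]
  have hfinal : (Bc/lam)^N * M ≤ Real.exp (-lam ^ ν) * M := by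
    apply mul_le_mul_of_nonneg_right _ hM0
    calc (Bc/lam)^N ≤ Real.exp (-1)^N := pow_le_pow_left₀ (by positivity) hq N
    _ = Real.exp (-(N:ℝ)) := by
        rw [← Real.exp_nat_mul]
        norm_num
    _ ≤ Real.exp (-lam ^ ν) := Real.exp_le_exp.2 (by linarith [hNge])
  calc ∫ x in K, u t x ^ 2 ≤ (Bc/lam)^N * M := by
        rw [← hEN]; exact main N le_rfl t ht
  _ ≤ _ := hfinal
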